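/- For integers k,m,r ≥ 1 with 1/k + 1/m + 1/r ≤ 1, if P, Q, R ∈ ℂ[X] are univariate polynomials satisfying P^k + Q^m = R^r and P, Q, R have no common irreducible factor (are setwise coprime), then P, Q, R are all constant. -/

import Mathlib

open Polynomial UniqueFactorizationMonoid UniqueFactorizationDomain

private lemma aux_coprime {A B C : Polynomial ℂ} {c : ℕ} (hc : 1 ≤ c)
    (h3 : ∀ q : Polynomial ℂ, q ∣ A → q ∣ B → q ∣ C ^ c)
    (hcop : ¬ ∃ q : Polynomial ℂ, Irreducible q ∧ q ∣ A ∧ q ∣ B ∧ q ∣ C) :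
    IsCoprime A B := by
  classical
  by_contra h
  rw [← EuclideanDomain.gcd_isUnit_iff] at h
  by_cases h0 : EuclideanDomain.gcd A B = 0
  · obtain ⟨hA, hB⟩ := EuclideanDomain.gcd_eq_zero_iff.mp h0
    subst hA; subst hB
    have hX : Polynomial.X ∣ C ^ c := h3 _ (dvd_zero _) (dvd_zero _)
    exact hcop ⟨Polynomial.X, Polynomial.irreducible_X, dvd_zero _, dvd_zero _,
      (Polynomial.irreducible_X.prime).dvd_of_dvd_pow hX⟩
  · obtain ⟨q, hq, hqg⟩ := WfDvdMonoid.exists_irreducible_factor h h0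
    have hqA : q ∣ A := hqg.trans (EuclideanDomain.gcd_dvd_left A B)
    have hqB : q ∣ B := hqg.trans (EuclideanDomain.gcd_dvd_right A B)
    exact hcop ⟨q, hq, hqA, hqB, hq.prime.dvd_of_dvd_pow (h3 q hqA hqB)⟩

set_option maxHeartbeats 1000000 in
theorem masonStothers_corollary_univariate (k m r : ℕ) (hk : 1 ≤ k) (hm : 1 ≤ m) (hr : 1 ≤ r)
    (habc : (1 : ℚ) / k + 1 / m + 1 / r ≤ 1)
    (P Q R : Polynomial ℂ) (heq : P ^ k + Q ^ m = R ^ r)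
    (hcop : ¬ ∃ q : Polynomial ℂ, Irreducible q ∧ q ∣ P ∧ q ∣ Q ∧ q ∣ R) :
    P.natDegree = 0 ∧ Q.natDegree = 0 ∧ R.natDegree = 0 := by
  classical
  -- pairwise coprimality
  have hPQ : IsCoprime P Q := by
    refine aux_coprime hr (fun q hP hQ => ?_) hcop
    exact heq ▸ dvd_add (hP.pow (by omega)) (hQ.pow (by omega))
  have hQR : IsCoprime Q R := by
    have hcop' : ¬ ∃ q : Polynomial ℂ, Irreducible q ∧ q ∣ Q ∧ q ∣ R ∧ q ∣ P := by
      rintro ⟨q, h1, h2, h3, h4⟩; exact hcop ⟨q, h1, h4, h2, h3⟩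
    refine aux_coprime hk (fun q hQ hR => ?_) hcop'
    have : P ^ k = R ^ r - Q ^ m := by linear_combination heq
    exact this ▸ dvd_sub (hR.pow (by omega)) (hQ.pow (by omega))
  have hRP : IsCoprime R P := by
    have hcop' : ¬ ∃ q : Polynomial ℂ, Irreducible q ∧ q ∣ R ∧ q ∣ P ∧ q ∣ Q := by
      rintro ⟨q, h1, h2, h3, h4⟩; exact hcop ⟨q, h1, h3, h4, h2⟩
    refine aux_coprime hm (fun q hR hP => ?_) hcop'
    have : Q ^ m = R ^ r - P ^ k := by linear_combination heq
    exact this ▸ dvd_sub (hR.pow (by omega)) (hP.pow (by omega))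
  -- degenerate (zero) cases
  by_cases hP0 : P = 0
  · subst hP0
    rw [isCoprime_zero_left] at hPQ
    have hQ : Q.natDegree = 0 := natDegree_eq_zero_of_isUnit hPQ
    have hRr : R ^ r = Q ^ m := by
      simpa [zero_pow (by omega : k ≠ 0)] using heq.symm
    have hRu : IsUnit R := by
      have : IsUnit (R ^ r) := hRr ▸ hPQ.pow _
      exact (isUnit_pow_iff (by omega)).mp this
    exact ⟨natDegree_zero, hQ, natDegree_eq_zero_of_isUnit hRu⟩
  by_cases hQ0 : Q = 0
  · subst hQ0
    rw [isCoprime_zero_right] at hPQ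
    have hRr : R ^ r = P ^ k := by
      simpa [zero_pow (by omega : m ≠ 0)] using heq.symm
    have hRu : IsUnit R := by
      have : IsUnit (R ^ r) := hRr ▸ hPQ.pow _
      exact (isUnit_pow_iff (by omega)).mp this
    exact ⟨natDegree_eq_zero_of_isUnit hPQ, natDegree_zero, natDegree_eq_zero_of_isUnit hRu⟩
  by_cases hR0 : R = 0
  · subst hR0
    rw [isCoprime_zero_left] at hRP
    have hQm : Q ^ m = -(P ^ k) := by
      have := heq; rw [zero_pow (by omega : r ≠ 0)] at this; linear_combination this
    have hQu : IsUnit Q := by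
      have : IsUnit (Q ^ m) := by rw [hQm]; exact (hRP.pow k).neg
      exact (isUnit_pow_iff (by omega)).mp this
    exact ⟨natDegree_eq_zero_of_isUnit hRP, natDegree_eq_zero_of_isUnit hQu, natDegree_zero⟩
  -- main case: Mason–Stothers
  have ha : P ^ k ≠ 0 := pow_ne_zero _ hP0
  have hb : Q ^ m ≠ 0 := pow_ne_zero _ hQ0
  have hc : (-(R ^ r)) ≠ 0 := neg_ne_zero.mpr (pow_ne_zero _ hR0)
  have hab : IsCoprime (P ^ k) (Q ^ m) := hPQ.pow
  have hbc : IsCoprime (Q ^ m) (-(R ^ r)) := (hQR.pow).neg_right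
  have hca : IsCoprime (-(R ^ r)) (P ^ k) := (hRP.pow).neg_left
  have hsum : P ^ k + Q ^ m + -(R ^ r) = 0 := by linear_combination heq
  rcases Polynomial.abc ha hb hc hab hsum with ⟨h1, h2, h3⟩ | ⟨h1, h2, h3⟩
  · -- derive a contradiction from the degree inequalities
    exfalso
    set N := (radical (P ^ k * Q ^ m * -(R ^ r))).natDegree with hN
    have hneg : (-(R ^ r)) = R ^ r * ((-1 : (Polynomial ℂ)ˣ) : Polynomial ℂ) := by simp
    have hradR : radical (-(R ^ r)) = radical R := by
      rw [hneg, radical_mul_of_isUnit_right (Units.isUnit _), radical_pow R (by omega : r ≠ 0)]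
    have hrad : radical (P ^ k * Q ^ m * -(R ^ r)) = radical P * radical Q * radical R := by
      rw [radical_mul (hca.symm.mul_left hbc).isRelPrime, radical_mul hab.isRelPrime, hradR,
        radical_pow P (by omega : k ≠ 0), radical_pow Q (by omega : m ≠ 0)]
    have hNle : N ≤ P.natDegree + Q.natDegree + R.natDegree := by
      have d1 : (radical P).natDegree ≤ P.natDegree :=
        natDegree_le_of_dvd radical_dvd_self hP0
      have d2 : (radical Q).natDegree ≤ Q.natDegree :=
        natDegree_le_of_dvd radical_dvd_self hQ0
      have d3 : (radical R).natDegree ≤ R.natDegree :=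
        natDegree_le_of_dvd radical_dvd_self hR0
      rw [hN, hrad, natDegree_mul (mul_ne_zero radical_ne_zero radical_ne_zero)
        radical_ne_zero, natDegree_mul radical_ne_zero radical_ne_zero]
      omega
    rw [natDegree_pow] at h1 h2
    rw [natDegree_neg, natDegree_pow] at h3
    set p := P.natDegree; set q := Q.natDegree; set s := R.natDegree
    have e1 : k * p + 1 ≤ p + q + s := le_trans h1 hNle
    have e2 : m * q + 1 ≤ p + q + s := le_trans h2 hNle
    have e3 : r * s + 1 ≤ p + q + s := le_trans h3 hNle
    -- rational arithmetic
    have hk' : (0:ℚ) < k := by exact_mod_cast Nat.lt_of_lt_of_le Nat.zero_lt_one hk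
    have hm' : (0:ℚ) < m := by exact_mod_cast Nat.lt_of_lt_of_le Nat.zero_lt_one hm
    have hr' : (0:ℚ) < r := by exact_mod_cast Nat.lt_of_lt_of_le Nat.zero_lt_one hr
    set S : ℚ := (p:ℚ) + q + s with hS
    have e1' : (k:ℚ) * p + 1 ≤ S := by rw [hS]; exact_mod_cast e1
    have e2' : (m:ℚ) * q + 1 ≤ S := by rw [hS]; exact_mod_cast e2
    have e3' : (r:ℚ) * s + 1 ≤ S := by rw [hS]; exact_mod_cast e3
    have f1 : (p:ℚ) < S / k := by rw [lt_div_iff₀ hk']; nlinarith [e1']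
    have f2 : (q:ℚ) < S / m := by rw [lt_div_iff₀ hm']; nlinarith [e2']
    have f3 : (s:ℚ) < S / r := by rw [lt_div_iff₀ hr']; nlinarith [e3']
    have hS0 : (0:ℚ) ≤ S := by positivity
    have : S < S * (1 / k + 1 / m + 1 / r) := by
      have : S / k = S * (1 / k) := by ring
      calc S = (p:ℚ) + q + s := hS
        _ < S / k + S / m + S / r := by linarith
        _ = S * (1 / k + 1 / m + 1 / r) := by ring
    have h4 := mul_le_mul_of_nonneg_left habc hS0
    rw [mul_one] at h4
    linarith
  · -- all derivatives zero: char zero means the powers are constant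
    rw [derivative_neg, neg_eq_zero] at h3
    have g1 : (P ^ k).natDegree = 0 := natDegree_eq_zero_of_derivative_eq_zero h1
    have g2 : (Q ^ m).natDegree = 0 := natDegree_eq_zero_of_derivative_eq_zero h2
    have g3 : (R ^ r).natDegree = 0 := natDegree_eq_zero_of_derivative_eq_zero h3
    rw [natDegree_pow, Nat.mul_eq_zero] at g1 g2 g3
    exact ⟨g1.resolve_left (by omega), g2.resolve_left (by omega), g3.resolve_left (by omega)⟩
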